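/- Takagi-type diagonalization of symmetric unitaries: let N ≥ 1 and let p be an N×N complex unitary matrix with pᵀ = p and det p = 1. Then there exist a real special orthogonal matrix O ∈ SO(N) and a diagonal unitary matrix d with det d = 1 such that p = O d Oᵀ. -/

import Mathlib

open Matrix Complex

noncomputable section

lemma simul_diag_real (N : ℕ) (A B : Matrix (Fin N) (Fin N) ℝ)
    (hA : Aᵀ = A) (hB : Bᵀ = B) (hAB : A * B = B * A) :
    ∃ (O : Matrix (Fin N) (Fin N) ℝ) (μ ν : Fin N → ℝ),
      Oᵀ * O = 1 ∧ A = O * Matrix.diagonal μ * Oᵀ ∧ B = O * Matrix.diagonal ν * Oᵀ := by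
  classical
  have hAh : A.IsHermitian := by
    rw [Matrix.IsHermitian, Matrix.conjTranspose_eq_transpose_of_trivial, hA]
  have hBh : B.IsHermitian := by
    rw [Matrix.IsHermitian, Matrix.conjTranspose_eq_transpose_of_trivial, hB]
  set LA := Matrix.toEuclideanLin A with hLA
  set LB := Matrix.toEuclideanLin B with hLB
  have hsA : LA.IsSymmetric := Matrix.isHermitian_iff_isSymmetric.mp hAh
  have hsB : LB.IsSymmetric := Matrix.isHermitian_iff_isSymmetric.mp hBh
  have happ : ∀ (M : Matrix (Fin N) (Fin N) ℝ) (v : EuclideanSpace ℝ (Fin N)),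
      Matrix.toEuclideanLin M v = (WithLp.equiv 2 (Fin N → ℝ)).symm (M *ᵥ (WithLp.equiv 2 (Fin N → ℝ) v)) :=
    fun M v => Matrix.toEuclideanLin_apply M v
  have hcomm : Commute LA LB := by
    rw [Commute, SemiconjBy]
    ext x
    simp only [Module.End.mul_apply, hLA, hLB, Matrix.toEuclideanLin_apply,
      Equiv.apply_symm_apply, Matrix.mulVec_mulVec, hAB]
  set V : ℝ × ℝ → Submodule ℝ (EuclideanSpace ℝ (Fin N)) :=
    fun i => Module.End.eigenspace LA i.2 ⊓ Module.End.eigenspace LB i.1 with hV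
  have hOrth : OrthogonalFamily ℝ (fun i => V i) (fun i => (V i).subtypeₗᵢ) :=
    hsA.orthogonalFamily_eigenspace_inf_eigenspace hsB
  have hInt : DirectSum.IsInternal V := hsA.directSum_isInternal_of_commute hsB hcomm
  have hIndep : iSupIndep V := hInt.submodule_iSupIndep
  haveI : Fintype {i // V i ≠ ⊥} := hIndep.fintypeNeBotOfFiniteDimensional
  have hInt' : DirectSum.IsInternal (fun i : {i // V i ≠ ⊥} => V i) :=
    DirectSum.isInternal_ne_bot_iff.mpr hInt
  set V' : {i // V i ≠ ⊥} → Submodule ℝ (EuclideanSpace ℝ (Fin N)) := fun i => V i.1 with hV'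
  have hOrth' : OrthogonalFamily ℝ (fun i => V' i)
      (fun i => (V' i).subtypeₗᵢ) := fun i j hij => hOrth (Subtype.coe_injective.ne hij)
  have hInt2 : DirectSum.IsInternal V' := hInt'
  have hn : Module.finrank ℝ (EuclideanSpace ℝ (Fin N)) = N := finrank_euclideanSpace_fin
  set b := hInt2.subordinateOrthonormalBasis hn hOrth' with hb
  set idx : Fin N → {i // V i ≠ ⊥} := fun i => hInt2.subordinateOrthonormalBasisIndex hn i hOrth' with hidx
  set μ : Fin N → ℝ := fun i => (idx i).1.2 with hμ
  set ν : Fin N → ℝ := fun i => (idx i).1.1 with hν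
  have hbmem : ∀ i, b i ∈ V (idx i) :=
    fun i => hInt2.subordinateOrthonormalBasis_subordinate hn i hOrth'
  have hbA : ∀ i, LA (b i) = μ i • b i := fun i => Module.End.mem_eigenspace_iff.mp (hbmem i).1
  have hbB : ∀ i, LB (b i) = ν i • b i := fun i => Module.End.mem_eigenspace_iff.mp (hbmem i).2
  set O : Matrix (Fin N) (Fin N) ℝ := Matrix.of (fun k i => b i k) with hO
  have hOrtho : Oᵀ * O = 1 := by
    ext i j
    have h2 := orthonormal_iff_ite.mp b.orthonormal i j
    simp only [PiLp.inner_apply, RCLike.inner_apply, starRingEnd_apply, star_trivial] at h2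
    simpa [Matrix.mul_apply, Matrix.one_apply, hO, mul_comm] using h2
  have hOO : O * Oᵀ = 1 := mul_eq_one_comm.mp hOrtho
  have hdiag : ∀ (M : Matrix (Fin N) (Fin N) ℝ) (w : Fin N → ℝ),
      (∀ i, Matrix.toEuclideanLin M (b i) = w i • b i) → M = O * Matrix.diagonal w * Oᵀ := by
    intro M w h
    have hMO : M * O = O * Matrix.diagonal w := by
      ext k i
      have h' := congrArg (fun v => v k) (h i)
      simp only [Matrix.toEuclideanLin_apply] at h'
      simp only [Matrix.mul_apply, Matrix.diagonal, Matrix.of_apply, hO]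
      calc (∑ j, M k j * b i j) = (M *ᵥ (WithLp.equiv 2 (Fin N → ℝ) (b i))) k := rfl
        _ = (w i • b i) k := by rw [← h']; rfl
        _ = ∑ j, b j k * (if j = i then w j else 0) := by
            simp [Finset.sum_ite_eq, PiLp.smul_apply, mul_comm]
    calc M = M * (O * Oᵀ) := by rw [hOO, Matrix.mul_one]
      _ = (M * O) * Oᵀ := by rw [Matrix.mul_assoc]
      _ = O * Matrix.diagonal w * Oᵀ := by rw [hMO]
  exact ⟨O, μ, ν, hOrtho, hdiag A μ hbA, hdiag B ν hbB⟩

/-- **Takagi-type diagonalization of symmetric unitaries:** every symmetric unitary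
`p ∈ SU(N)` can be written `p = O d Oᵀ` with `O` real special orthogonal and `d` a
diagonal unitary of determinant one. -/
theorem symmetric_unitary_diagonalization (N : ℕ) (hN : 1 ≤ N)
    (p : Matrix (Fin N) (Fin N) ℂ)
    (hp : p ∈ Matrix.unitaryGroup (Fin N) ℂ) (hsym : pᵀ = p) (hdet : p.det = 1) :
    ∃ O d : Matrix (Fin N) (Fin N) ℂ,
      (∀ i j, (O i j).im = 0) ∧ Oᵀ * O = 1 ∧ O.det = 1 ∧
      d.IsDiag ∧ d ∈ Matrix.unitaryGroup (Fin N) ℂ ∧ d.det = 1 ∧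
      p = O * d * Oᵀ := by
  classical
  have hp1 : star p * p = 1 := hp.1
  have hp2 : p * star p = 1 := hp.2
  have hpe : ∀ i j, p j i = p i j := fun i j => by
    have h := congrFun (congrFun hsym j) i
    rw [Matrix.transpose_apply] at h
    exact h.symm
  have hstar : ∀ i j, star p i j = (starRingEnd ℂ) (p i j) := fun i j => by
    rw [Matrix.star_eq_conjTranspose, Matrix.conjTranspose_apply, hpe, starRingEnd_apply]
  set A : Matrix (Fin N) (Fin N) ℝ := Matrix.of (fun i j => (p i j).re) with hA
  set B : Matrix (Fin N) (Fin N) ℝ := Matrix.of (fun i j => (p i j).im) with hB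
  set φ : Matrix (Fin N) (Fin N) ℝ →+* Matrix (Fin N) (Fin N) ℂ :=
    (Complex.ofRealHom).mapMatrix with hφ
  have hφA : ∀ M : Matrix (Fin N) (Fin N) ℝ, ∀ i j, φ M i j = (M i j : ℂ) := fun M i j => rfl
  have hP : φ A + I • φ B = p := by
    ext i j
    simp only [Matrix.add_apply, Matrix.smul_apply, hφA, smul_eq_mul]
    rw [hA, hB]
    simp only [Matrix.of_apply]
    rw [mul_comm, Complex.re_add_im]
  have hQ : φ A - I • φ B = star p := by
    ext i j
    simp only [Matrix.sub_apply, Matrix.smul_apply, hφA, smul_eq_mul, hstar]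
    rw [hA, hB]
    simp only [Matrix.of_apply]
    apply Complex.ext <;> simp
  have e1 : (2:ℂ) • φ A = p + star p := by
    rw [two_smul, ← hQ, ← hP]; abel
  have e2 : (2:ℂ) • (I • φ B) = p - star p := by
    rw [two_smul, ← hQ, ← hP]; abel
  have hc4 : ((4:ℂ)*I) ≠ 0 := by simp [Complex.I_ne_zero]
  have hcomm' : φ A * φ B = φ B * φ A := by
    apply smul_right_injective _ hc4
    have l : ((2:ℂ) • φ A) * ((2:ℂ) • (I • φ B)) = ((4:ℂ)*I) • (φ A * φ B) := by
      rw [smul_mul_assoc, Matrix.mul_smul, Matrix.mul_smul, smul_smul, smul_smul]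
      congr 1; ring
    have r : ((2:ℂ) • (I • φ B)) * ((2:ℂ) • φ A) = ((4:ℂ)*I) • (φ B * φ A) := by
      rw [smul_mul_assoc, smul_mul_assoc, Matrix.mul_smul, smul_smul, smul_smul]
      congr 1; ring
    have mid : (p + star p) * (p - star p) = (p - star p) * (p + star p) := by
      simp only [mul_add, add_mul, mul_sub, sub_mul, hp1, hp2]
      abel
    calc ((4:ℂ)*I) • (φ A * φ B) = ((2:ℂ) • φ A) * ((2:ℂ) • (I • φ B)) := l.symm
      _ = (p + star p) * (p - star p) := by rw [e1, e2]
      _ = (p - star p) * (p + star p) := mid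
      _ = ((2:ℂ) • (I • φ B)) * ((2:ℂ) • φ A) := by rw [e1, e2]
      _ = ((4:ℂ)*I) • (φ B * φ A) := r
  have hsq : φ A * φ A + φ B * φ B = 1 := by
    calc φ A * φ A + φ B * φ B
        = (φ A - I • φ B) * (φ A + I • φ B) := by
          simp only [mul_add, add_mul, mul_sub, sub_mul, smul_mul_assoc, Matrix.mul_smul,
            smul_smul, Complex.I_mul_I, neg_one_smul, hcomm']
          abel
      _ = star p * p := by rw [hP, hQ]
      _ = 1 := hp1
  -- transfer to ℝ
  have hφinj : Function.Injective φ := fun M M' h => by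
    ext i j
    exact Complex.ofReal_injective (congrFun (congrFun h i) j)
  have hABcomm : A * B = B * A := hφinj (by rw [_root_.map_mul, _root_.map_mul, hcomm'])
  have hABsq : A * A + B * B = 1 := hφinj (by rw [_root_.map_add, _root_.map_mul, _root_.map_mul, _root_.map_one, hsq])
  have hAsym : Aᵀ = A := by
    ext i j
    simp only [Matrix.transpose_apply, hA, Matrix.of_apply, hpe]
  have hBsym : Bᵀ = B := by
    ext i j
    simp only [Matrix.transpose_apply, hB, Matrix.of_apply, hpe]
  obtain ⟨O₀, μ, ν, hO₀, hAd, hBd⟩ := simul_diag_real N A B hAsym hBsym hABcomm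
  -- fix the sign of the determinant
  obtain ⟨O, hOrt, hdetO, hA2, hB2⟩ : ∃ O : Matrix (Fin N) (Fin N) ℝ,
      Oᵀ * O = 1 ∧ O.det = 1 ∧ A = O * Matrix.diagonal μ * Oᵀ ∧
      B = O * Matrix.diagonal ν * Oᵀ := by
    have hd2 : O₀.det * O₀.det = 1 := by
      have := congrArg Matrix.det hO₀
      rwa [Matrix.det_mul, Matrix.det_transpose, Matrix.det_one] at this
    rcases mul_self_eq_one_iff.mp hd2 with h1 | h1
    · exact ⟨O₀, hO₀, h1, hAd, hBd⟩
    · set i0 : Fin N := ⟨0, hN⟩ with hi0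
      set s : Fin N → ℝ := fun j => if j = i0 then -1 else 1 with hs
      set S := Matrix.diagonal s with hS
      have hss : ∀ j, s j * s j = 1 := fun j => by
        by_cases h : j = i0 <;> simp [hs, h]
      have hSS : S * S = 1 := by
        rw [hS, Matrix.diagonal_mul_diagonal, ← Matrix.diagonal_one]
        exact congrArg Matrix.diagonal (funext hss)
      have hST : Sᵀ = S := Matrix.diagonal_transpose s
      have hdetS : S.det = -1 := by
        rw [hS, Matrix.det_diagonal, hs]
        simp
      have hScomm : ∀ w : Fin N → ℝ, S * Matrix.diagonal w = Matrix.diagonal w * S := by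
        intro w
        rw [hS, Matrix.diagonal_mul_diagonal, Matrix.diagonal_mul_diagonal]
        exact congrArg Matrix.diagonal (funext fun j => mul_comm _ _)
      refine ⟨O₀ * S, ?_, ?_, ?_, ?_⟩
      · rw [Matrix.transpose_mul, hST]
        calc S * O₀ᵀ * (O₀ * S) = S * (O₀ᵀ * O₀) * S := by noncomm_ring
          _ = S * S := by rw [hO₀, Matrix.mul_one]
          _ = 1 := hSS
      · rw [Matrix.det_mul, h1, hdetS]; ring
      · rw [Matrix.transpose_mul, hST]
        calc A = O₀ * Matrix.diagonal μ * O₀ᵀ := hAd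
          _ = O₀ * (S * (S * Matrix.diagonal μ * S) * S) * O₀ᵀ := by
              rw [show S * (S * Matrix.diagonal μ * S) * S
                    = (S * S) * Matrix.diagonal μ * (S * S) by noncomm_ring, hSS]
              rw [Matrix.one_mul, Matrix.mul_one]
          _ = O₀ * S * (S * Matrix.diagonal μ * S) * (S * O₀ᵀ) := by noncomm_ring
          _ = O₀ * S * Matrix.diagonal μ * (S * O₀ᵀ) := by
              rw [hScomm μ, Matrix.mul_assoc (Matrix.diagonal μ), hSS, Matrix.mul_one]
      · rw [Matrix.transpose_mul, hST]
        calc B = O₀ * Matrix.diagonal ν * O₀ᵀ := hBd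
          _ = O₀ * (S * (S * Matrix.diagonal ν * S) * S) * O₀ᵀ := by
              rw [show S * (S * Matrix.diagonal ν * S) * S
                    = (S * S) * Matrix.diagonal ν * (S * S) by noncomm_ring, hSS]
              rw [Matrix.one_mul, Matrix.mul_one]
          _ = O₀ * S * (S * Matrix.diagonal ν * S) * (S * O₀ᵀ) := by noncomm_ring
          _ = O₀ * S * Matrix.diagonal ν * (S * O₀ᵀ) := by
              rw [hScomm ν, Matrix.mul_assoc (Matrix.diagonal ν), hSS, Matrix.mul_one]
  -- now assemble over ℂ
  set Oc := φ O with hOc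
  set d : Matrix (Fin N) (Fin N) ℂ :=
    Matrix.diagonal (fun i => (μ i : ℂ) + (ν i : ℂ) * I) with hd
  have him : ∀ i j, (Oc i j).im = 0 := fun i j => by
    rw [hOc, hφA]
    exact Complex.ofReal_im _
  have hOcT : Ocᵀ = φ Oᵀ := rfl
  have hOcU : Ocᵀ * Oc = 1 := by
    rw [hOcT, hOc, ← _root_.map_mul, hOrt, _root_.map_one]
  have hstarOc : star Oc = Ocᵀ := by
    rw [Matrix.star_eq_conjTranspose]
    ext i j
    rw [Matrix.conjTranspose_apply, Matrix.transpose_apply, hOc, hφA]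
    exact Complex.conj_ofReal _
  have hdetOc : Oc.det = 1 := by
    rw [hOc, hφ, ← RingHom.map_det, hdetO]
    simp
  have hdiagmap : ∀ w : Fin N → ℝ,
      φ (Matrix.diagonal w) = Matrix.diagonal (fun i => (w i : ℂ)) := by
    intro w
    rw [hφ, RingHom.mapMatrix_apply, Matrix.diagonal_map (by simp)]
    rfl
  have hpeq : p = Oc * d * Ocᵀ := by
    have hAc : φ A = Oc * Matrix.diagonal (fun i => (μ i : ℂ)) * Ocᵀ := by
      rw [hA2, _root_.map_mul, _root_.map_mul, hdiagmap, hOcT]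
    have hBc : φ B = Oc * Matrix.diagonal (fun i => (ν i : ℂ)) * Ocᵀ := by
      rw [hB2, _root_.map_mul, _root_.map_mul, hdiagmap, hOcT]
    have hdsum : Matrix.diagonal (fun i => (μ i : ℂ))
        + I • Matrix.diagonal (fun i => (ν i : ℂ)) = d := by
      ext i j
      by_cases h : i = j
      · subst h
        simp [hd, Matrix.diagonal_apply_eq]
        ring
      · simp [hd, Matrix.diagonal_apply_ne _ h]
    rw [← hP, hAc, hBc, ← hdsum]
    rw [Matrix.mul_add, Matrix.add_mul, Matrix.mul_smul, Matrix.smul_mul]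
  have hOcmem : Oc ∈ Matrix.unitaryGroup (Fin N) ℂ := by
    rw [Matrix.mem_unitaryGroup_iff, hstarOc]
    exact mul_eq_one_comm.mp hOcU
  have hdmem : d ∈ Matrix.unitaryGroup (Fin N) ℂ := by
    have hd' : d = star Oc * (p * Oc) := by
      rw [hstarOc, hpeq, Matrix.mul_assoc, Matrix.mul_assoc, hOcU, Matrix.mul_one,
        ← Matrix.mul_assoc, hOcU, Matrix.one_mul]
    rw [hd']
    exact mul_mem (Unitary.star_mem hOcmem) (mul_mem hp hOcmem)
  have hdetd : d.det = 1 := by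
    rw [hpeq, Matrix.det_mul, Matrix.det_mul, Matrix.det_transpose, hdetOc,
      one_mul, mul_one] at hdet
    exact hdet
  exact ⟨Oc, d, him, hOcU, hdetOc, Matrix.isDiag_diagonal _, hdmem, hdetd, hpeq⟩
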